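/- arXiv:1902.07375 — 2 statements merged into one kernel-verified Lean document; each statement's English description precedes it below -/
import Mathlib

section
/- Let B be a skew-symmetric n×n integer matrix and suppose the index set {1,...,n} is partitioned into two disjoint sets S and T such that an integer k > 1 divides b_{ij} whenever i ∈ S and j ∈ T. Then after mutating B at any index m, the resulting matrix B' = μ_m(B) still satisfies: k divides b'_{ij} for all i ∈ S, j ∈ T. (I.e., the property of being a k-partition is preserved by mutation.) -/
/-- Matrix mutation of an integer matrix `B` at index `m`. -/
def matrixMutation {n : ℕ} (m : Fin n) (B : Matrix (Fin n) (Fin n) ℤ) :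
    Matrix (Fin n) (Fin n) ℤ :=
  fun i j =>
    if i = m ∨ j = m then -B i j
    else if B i m * B m j > 0 then B i j + B i m * |B m j|
    else B i j

theorem kPartition_preserved_by_mutation {n : ℕ}
    (B : Matrix (Fin n) (Fin n) ℤ) (hB : ∀ i j, B j i = -B i j)
    (S T : Set (Fin n)) (hdisj : Disjoint S T) (hunion : S ∪ T = Set.univ)
    (k : ℤ) (hk : 1 < k)
    (hdiv : ∀ i ∈ S, ∀ j ∈ T, k ∣ B i j)
    (m : Fin n) :
    ∀ i ∈ S, ∀ j ∈ T, k ∣ matrixMutation m B i j := by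
  intro i hi j hj
  have hij : k ∣ B i j := hdiv i hi j hj
  unfold matrixMutation
  split
  · exact dvd_neg.mpr hij
  · split
    · have hm : m ∈ S ∪ T := hunion ▸ Set.mem_univ m
      apply dvd_add hij
      rcases hm with hmS | hmT
      · exact Dvd.dvd.mul_left ((dvd_abs k _).mpr (hdiv m hmS j hj)) _
      · exact Dvd.dvd.mul_right (hdiv i hi m hmT) _
    · exact hij
end

section
/- Let B be a skew-symmetric n×n integer matrix, and let S, T partition {1,...,n} with k | b_{ij} for all i ∈ S, j ∈ T, where k > 1. Then for ANY finite sequence of mutations μ_{m_1}, ..., μ_{m_r} applied to B, the resulting matrix B^{(r)} satisfies k | b^{(r)}_{ij} for all i ∈ S, j ∈ T. -/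
lemma mut_skew {n : ℕ} (m : Fin n) (B : Matrix (Fin n) (Fin n) ℤ)
    (hB : ∀ i j, B j i = -B i j) :
    ∀ i j, matrixMutation m B j i = -matrixMutation m B i j := by
  intro i j
  unfold matrixMutation
  by_cases h : i = m ∨ j = m
  · have h' : j = m ∨ i = m := h.symm
    simp [h, h', hB i j]
  · have h' : ¬ (j = m ∨ i = m) := fun hc => h hc.symm
    simp only [h, h', if_false]
    have hcond : B j m * B m i = B i m * B m j := by
      rw [hB m j, hB i m]; ring
    by_cases hp : B i m * B m j > 0
    · rw [if_pos (by rw [hcond]; exact hp), if_pos hp, hB i j, hB m j, hB i m]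
      rw [abs_neg]
      rcases lt_or_ge (B i m) 0 with hneg | hpos
      · have : B m j < 0 := by nlinarith
        rw [abs_of_nonpos (le_of_lt hneg), abs_of_nonpos (le_of_lt this)]; ring
      · have hpos' : 0 < B i m :=
          hpos.lt_of_ne (fun h0 => by rw [← h0] at hp; simp at hp)
        have : 0 < B m j := by nlinarith
        rw [abs_of_pos hpos', abs_of_pos this]; ring
    · rw [if_neg (by rw [hcond]; exact hp), if_neg hp, hB i j]

lemma mut_div {n : ℕ} (m : Fin n) (B : Matrix (Fin n) (Fin n) ℤ)
    (S T : Set (Fin n)) (hunion : S ∪ T = Set.univ) (k : ℤ)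
    (hdiv : ∀ i ∈ S, ∀ j ∈ T, k ∣ B i j) :
    ∀ i ∈ S, ∀ j ∈ T, k ∣ matrixMutation m B i j := by
  intro i hi j hj
  unfold matrixMutation
  by_cases h : i = m ∨ j = m
  · simp only [h, if_true]
    exact dvd_neg.mpr (hdiv i hi j hj)
  · simp only [h, if_false]
    have hd : k ∣ B i m * |B m j| := by
      have hm : m ∈ S ∪ T := by rw [hunion]; trivial
      rcases hm with hmS | hmT
      · exact Dvd.dvd.mul_left ((dvd_abs k _).mpr (hdiv m hmS j hj)) _
      · exact Dvd.dvd.mul_right (hdiv i hi m hmT) _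
    by_cases hp : B i m * B m j > 0
    · rw [if_pos hp]; exact dvd_add (hdiv i hi j hj) hd
    · rw [if_neg hp]; exact hdiv i hi j hj

theorem kPartition_preserved_by_mutation_sequences {n : ℕ}
    (B : Matrix (Fin n) (Fin n) ℤ) (hB : ∀ i j, B j i = -B i j)
    (S T : Set (Fin n)) (hdisj : Disjoint S T) (hunion : S ∪ T = Set.univ)
    (k : ℤ) (hk : 1 < k)
    (hdiv : ∀ i ∈ S, ∀ j ∈ T, k ∣ B i j)
    (ms : List (Fin n)) :
    ∀ i ∈ S, ∀ j ∈ T,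
      k ∣ (ms.foldl (fun M m => matrixMutation m M) B) i j := by
  induction ms generalizing B with
  | nil => exact hdiv
  | cons m ms ih =>
    exact ih (matrixMutation m B) (mut_skew m B hB)
      (mut_div m B S T hunion k hdiv)
end
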